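/- Let q be an odd prime, K a number field in which q is unramified, and α, β algebraic integers in K with q dividing α^q - β^q in the ring of integers O_K. Then q^2 divides α^q - β^q in O_K. -/

import Mathlib

open NumberField

/-- If the odd prime `q` is unramified in the number field `K` (i.e. the ideal `(q)` is
squarefree in `𝓞 K`) and `q ∣ α^q - β^q` for algebraic integers `α, β`, then
`q² ∣ α^q - β^q`. -/
theorem q_sq_dvd_pow_sub_pow (q : ℕ) (hq : q.Prime) (hqo : Odd q)
    (K : Type*) [Field K] [NumberField K]
    (hur : Squarefree (Ideal.span {(q : 𝓞 K)}))
    (α β : 𝓞 K) (h : (q : 𝓞 K) ∣ α ^ q - β ^ q) :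
    (q : 𝓞 K) ^ 2 ∣ α ^ q - β ^ q := by
  -- Step 1: q ∣ (α - β)^q
  obtain ⟨r, hr⟩ := exists_add_pow_prime_eq hq (α - β) β
  rw [sub_add_cancel] at hr
  have h1 : (q : 𝓞 K) ∣ (α - β) ^ q := by
    have heq : (α - β) ^ q = (α ^ q - β ^ q) - q * ((α - β) * β * r) := by rw [hr]; ring
    rw [heq]
    exact dvd_sub h (Dvd.intro _ rfl)
  -- Step 2: q ∣ α - β, using that the ideal (q) is radical
  have h2 : (q : 𝓞 K) ∣ α - β := by
    have hrad := hur.isRadical q (Ideal.span {α - β})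
    rw [Ideal.span_singleton_pow] at hrad
    have hdvd : Ideal.span {(q : 𝓞 K)} ∣ Ideal.span {(α - β) ^ q} :=
      Ideal.dvd_iff_le.mpr (Ideal.span_singleton_le_span_singleton.mpr h1)
    have := Ideal.dvd_iff_le.mp (hrad hdvd)
    exact Ideal.mem_span_singleton.mp (this (Ideal.mem_span_singleton_self _))
  -- Step 3: q ∣ geometric sum
  have h3 : (q : 𝓞 K) ∣ ∑ i ∈ Finset.range q, α ^ i * β ^ (q - 1 - i) := by
    have key : (q : 𝓞 K) ∣ (∑ i ∈ Finset.range q, α ^ i * β ^ (q - 1 - i))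
        - ∑ i ∈ Finset.range q, β ^ i * β ^ (q - 1 - i) := by
      rw [← Finset.sum_sub_distrib]
      refine Finset.dvd_sum fun i _ => ?_
      have heq : α ^ i * β ^ (q - 1 - i) - β ^ i * β ^ (q - 1 - i)
          = (α ^ i - β ^ i) * β ^ (q - 1 - i) := by ring
      rw [heq]
      exact (h2.trans (sub_dvd_pow_sub_pow α β i)).mul_right _
    have hsum : ∑ i ∈ Finset.range q, β ^ i * β ^ (q - 1 - i)
        = (q : 𝓞 K) * β ^ (q - 1) := by
      rw [Finset.sum_congr rfl fun i hi => ?_, Finset.sum_const, Finset.card_range,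
        nsmul_eq_mul]
      rw [← pow_add]
      congr 1
      have := Finset.mem_range.mp hi
      omega
    rw [hsum] at key
    have := dvd_add key (Dvd.intro (β ^ (q - 1)) rfl)
    simpa using this
  -- Step 4: combine
  have h4 : α ^ q - β ^ q
      = (∑ i ∈ Finset.range q, α ^ i * β ^ (q - 1 - i)) * (α - β) := by
    rw [geom_sum₂_mul]
  rw [h4, sq]
  exact mul_dvd_mul h3 h2
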